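/- The inequality θ̄·δB̄·z⁺ + θ̄·δB̲·z⁻ + δB̲·θ − δp ≥ θ̄·δB̲ is valid on P₀ ∪ P₁ ∪ P₂, and hence on conv(P₀ ∪ P₁ ∪ P₂). -/
import Mathlib


abbrev Pt := ℝ × ℝ × ℝ × ℝ × ℝ

def P0 (tl tu : ℝ) : Set Pt :=
  {p | p.1 = 0 ∧ p.2.1 = 0 ∧ p.2.2.1 = 0 ∧ p.2.2.2.2 = 0 ∧ tl ≤ p.2.2.2.1 ∧ p.2.2.2.1 ≤ tu}

def P1 (tu bl bu : ℝ) : Set Pt :=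
  {p | p.1 = 1 ∧ p.2.1 = 1 ∧ p.2.2.1 = 0 ∧ 0 ≤ p.2.2.2.1 ∧ p.2.2.2.1 ≤ tu ∧
    bl * p.2.2.2.1 ≤ p.2.2.2.2 ∧ p.2.2.2.2 ≤ bu * p.2.2.2.1}

def P2 (tl bl bu : ℝ) : Set Pt :=
  {p | p.1 = 1 ∧ p.2.1 = 0 ∧ p.2.2.1 = 1 ∧ tl ≤ p.2.2.2.1 ∧ p.2.2.2.1 ≤ 0 ∧
    bu * p.2.2.2.1 ≤ p.2.2.2.2 ∧ p.2.2.2.2 ≤ bl * p.2.2.2.1}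

theorem stmt_8 (tl tu bl bu : ℝ) (h1 : tl < 0) (h2 : 0 < tu) (h3 : bl < 0) (h4 : 0 < bu) :
    (∀ p ∈ P0 tl tu ∪ P1 tu bl bu ∪ P2 tl bl bu,
      tu * bu * p.2.1 + tu * bl * p.2.2.1 + bl * p.2.2.2.1 - p.2.2.2.2 ≥ tu * bl) ∧
    (∀ p ∈ convexHull ℝ (P0 tl tu ∪ P1 tu bl bu ∪ P2 tl bl bu),
      tu * bu * p.2.1 + tu * bl * p.2.2.1 + bl * p.2.2.2.1 - p.2.2.2.2 ≥ tu * bl) := by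
  have key : ∀ p ∈ P0 tl tu ∪ P1 tu bl bu ∪ P2 tl bl bu,
      tu * bu * p.2.1 + tu * bl * p.2.2.1 + bl * p.2.2.2.1 - p.2.2.2.2 ≥ tu * bl := by
    rintro p ((⟨_, hz1, hz2, hd, _, ht⟩ | ⟨_, hz1, hz2, _, ht, _, hd⟩) | ⟨_, hz1, hz2, _, _, _, hd⟩)
    · rw [hz1, hz2, hd]
      nlinarith
    · rw [hz1, hz2]
      nlinarith [mul_le_mul_of_nonneg_left ht (le_of_lt h4)]
    · rw [hz1, hz2]
      nlinarith
  refine ⟨key, ?_⟩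
  have hlin : IsLinearMap ℝ (fun p : Pt =>
      tu * bu * p.2.1 + tu * bl * p.2.2.1 + bl * p.2.2.2.1 - p.2.2.2.2) := by
    constructor
    · intro x y; simp; ring
    · intro c x; simp; ring
  have hconv : Convex ℝ {p : Pt |
      tu * bu * p.2.1 + tu * bl * p.2.2.1 + bl * p.2.2.2.1 - p.2.2.2.2 ≥ tu * bl} :=
    convex_halfSpace_ge hlin (tu * bl)
  intro p hp
  exact convexHull_min key hconv hp
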